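/- Every endomorphism T of an object V in Vect_{F_1} decomposes V into a direct sum V = ⊕_j V_j with T(V_j) ⊆ V_j, such that each restriction T|_{V_j} is equivalent (conjugate by a pointed-set isomorphism) to either the nilpotent Jordan block N_m on {0,1,...,m} given by N_m(k) = k-1 (with N_m(1)=0), or the cyclic permutation C_m given by C_m(k) = k-1 for k ≥ 2 and C_m(1) = m, where m = |V_j| - 1. This decomposition is unique up to reordering of the summands. -/

import Mathlib

/-- A morphism of pointed sets (endomorphism condition) in `Vect_{F₁}`. -/
def IsF1End {V : Type} [Zero V] (T : V → V) : Prop :=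
  T 0 = 0 ∧ ∀ x y : V, T x = T y → T x ≠ 0 → x = y

/-- The model block on `{0, 1, …, m}` (as natural numbers):
`true` gives the nilpotent Jordan block `N_m : k ↦ k - 1` (with `N_m 1 = 0`);
`false` gives the cyclic block `C_m : k ↦ k - 1` for `k ≥ 2`, `C_m 1 = m`, `C_m 0 = 0`. -/
def modelBlock (b : Bool) (m : ℕ) : ℕ → ℕ :=
  if b then fun k => k - 1
  else fun k => if k = 0 then 0 else if k = 1 then m else k - 1

/-- `T` decomposes according to the list of blocks `l` (each entry `(b, m)` a block of
dimension `m ≥ 1` of nilpotent (`b = true`) or cyclic (`b = false`) type): there are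
pointed embeddings `e j : {0, …, m_j} → V` intertwining `T` with the model block, whose
nonzero parts partition `V \ {0}`. -/
def IsJordanDecomp {V : Type} [Zero V] (T : V → V) (l : List (Bool × ℕ)) : Prop :=
  ∃ e : Fin l.length → ℕ → V,
    (∀ j, 1 ≤ (l.get j).2) ∧
    (∀ j, e j 0 = 0) ∧
    (∀ j, Set.InjOn (e j) (Set.Iic (l.get j).2)) ∧
    (∀ j, ∀ k ≤ (l.get j).2, T (e j k) = e j (modelBlock (l.get j).1 (l.get j).2 k)) ∧
    (∀ v : V, v ≠ 0 →
      ∃! jk : Fin l.length × ℕ, 1 ≤ jk.2 ∧ jk.2 ≤ (l.get jk.1).2 ∧ e jk.1 jk.2 = v)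

namespace F1J

open Function

variable {V : Type} [Zero V]

def EvZ (T : V → V) (v : V) : Prop := ∃ n, T^[n] v = 0

theorem iter_zero {T : V → V} (hT : IsF1End T) (n : ℕ) : T^[n] (0 : V) = 0 := by
  induction n with
  | zero => rfl
  | succ n ih => rw [iterate_succ_apply', ih, hT.1]

theorem cancel {T : V → V} (hT : IsF1End T) :
    ∀ (n : ℕ) (x y : V), T^[n] x = T^[n] y → T^[n] x ≠ 0 → x = y := by
  intro n
  induction n with
  | zero => exact fun x y h _ => h
  | succ n ih =>
    intro x y h hne
    rw [iterate_succ_apply] at h hne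
    have h1 : T x = T y := ih (T x) (T y) h hne
    have h2 : T x ≠ 0 := by
      intro h0
      apply hne
      rw [h0, iter_zero hT]
    exact hT.2 x y h1 h2

theorem modelBlock_true (m k : ℕ) : modelBlock true m k = k - 1 := rfl

theorem modelBlock_false (m k : ℕ) :
    modelBlock false m k = if k = 0 then 0 else if k = 1 then m else k - 1 := rfl

theorem modelBlock_zero (b : Bool) (m : ℕ) : modelBlock b m 0 = 0 := by
  cases b <;> simp [modelBlock_true, modelBlock_false]

theorem modelBlock_le {b : Bool} {m k : ℕ} (hk : k ≤ m) : modelBlock b m k ≤ m := by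
  cases b
  · rw [modelBlock_false]; split_ifs <;> omega
  · rw [modelBlock_true]; omega

theorem modelBlock_iter_le {b : Bool} {m : ℕ} : ∀ (n : ℕ) {k}, k ≤ m →
    (modelBlock b m)^[n] k ≤ m := by
  intro n
  induction n with
  | zero => intro k hk; simpa using hk
  | succ n ih => intro k hk; rw [iterate_succ_apply]; exact ih (modelBlock_le hk)

theorem modelBlock_iter_lt {b : Bool} {m : ℕ} : ∀ {n k : ℕ}, n < k → k ≤ m →
    (modelBlock b m)^[n] k = k - n := by
  intro n
  induction n with
  | zero => intro k _ _; simp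
  | succ n ih =>
    intro k hn hk
    rw [iterate_succ_apply', ih (by omega) hk]
    cases b
    · rw [modelBlock_false, if_neg (by omega), if_neg (by omega)]; omega
    · rw [modelBlock_true]; omega

theorem modelBlock_true_iter (m : ℕ) : ∀ (n k : ℕ), (modelBlock true m)^[n] k = k - n := by
  intro n
  induction n with
  | zero => intro k; simp
  | succ n ih =>
    intro k
    rw [iterate_succ_apply', ih, modelBlock_true]
    omega

theorem modelBlock_false_iter_mem {m : ℕ} (hm : 1 ≤ m) : ∀ (n : ℕ) {k}, 1 ≤ k → k ≤ m →
    1 ≤ (modelBlock false m)^[n] k ∧ (modelBlock false m)^[n] k ≤ m := by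
  intro n
  induction n with
  | zero => intro k h1 h2; simpa using ⟨h1, h2⟩
  | succ n ih =>
    intro k h1 h2
    rw [iterate_succ_apply]
    have : 1 ≤ modelBlock false m k ∧ modelBlock false m k ≤ m := by
      rw [modelBlock_false]; split_ifs <;> omega
    exact ih this.1 this.2

structure Decomp (T : V → V) (l : List (Bool × ℕ)) where
  e : Fin l.length → ℕ → V
  hm : ∀ j, 1 ≤ (l.get j).2
  h0 : ∀ j, e j 0 = 0
  hinj : ∀ j, Set.InjOn (e j) (Set.Iic (l.get j).2)
  hcomm : ∀ j, ∀ k ≤ (l.get j).2, T (e j k) = e j (modelBlock (l.get j).1 (l.get j).2 k)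
  hcover : ∀ v : V, v ≠ 0 →
    ∃! jk : Fin l.length × ℕ, 1 ≤ jk.2 ∧ jk.2 ≤ (l.get jk.1).2 ∧ e jk.1 jk.2 = v

theorem isJordanDecomp_iff {T : V → V} {l : List (Bool × ℕ)} :
    IsJordanDecomp T l ↔ Nonempty (Decomp T l) :=
  ⟨fun ⟨e, a, b, c, d, f⟩ => ⟨⟨e, a, b, c, d, f⟩⟩,
   fun ⟨d⟩ => ⟨d.e, d.hm, d.h0, d.hinj, d.hcomm, d.hcover⟩⟩

namespace Decomp

variable {T : V → V} {l : List (Bool × ℕ)} (d : Decomp T l)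

theorem e_ne {j : Fin l.length} {k : ℕ} (h1 : 1 ≤ k) (hk : k ≤ (l.get j).2) :
    d.e j k ≠ 0 := by
  intro h
  have : k = 0 := d.hinj j (Set.mem_Iic.2 hk) (Set.mem_Iic.2 (Nat.zero_le _))
    (by rw [h, d.h0 j])
  omega

theorem iter {j : Fin l.length} {k : ℕ} (hk : k ≤ (l.get j).2) (n : ℕ) :
    T^[n] (d.e j k) = d.e j ((modelBlock (l.get j).1 (l.get j).2)^[n] k) := by
  induction n with
  | zero => rfl
  | succ n ih =>
    rw [iterate_succ_apply', ih, iterate_succ_apply']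
    exact d.hcomm j _ (modelBlock_iter_le n hk)

def Blk (j : Fin l.length) (v : V) : Prop :=
  ∃ k, 1 ≤ k ∧ k ≤ (l.get j).2 ∧ d.e j k = v

theorem blk_self (j : Fin l.length) : d.Blk j (d.e j 1) := ⟨1, le_refl 1, d.hm j, rfl⟩

theorem blk_ne {j : Fin l.length} {v : V} (h : d.Blk j v) : v ≠ 0 := by
  obtain ⟨k, h1, h2, rfl⟩ := h
  exact d.e_ne h1 h2

theorem blk_unique {j j' : Fin l.length} {v : V} (h : d.Blk j v) (h' : d.Blk j' v) :
    j = j' := by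
  obtain ⟨k, h1, h2, h3⟩ := h
  obtain ⟨k', h1', h2', h3'⟩ := h'
  have hv : v ≠ 0 := by rw [← h3]; exact d.e_ne h1 h2
  obtain ⟨jk, _, huniq⟩ := d.hcover v hv
  have e1 := huniq (j, k) ⟨h1, h2, h3⟩
  have e2 := huniq (j', k') ⟨h1', h2', h3'⟩
  have : (j, k) = ((j', k') : Fin l.length × ℕ) := e1.trans e2.symm
  exact congrArg Prod.fst this

theorem blk_closed {j : Fin l.length} {v : V} (h : d.Blk j v) {n : ℕ}
    (hn : T^[n] v ≠ 0) : d.Blk j (T^[n] v) := by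
  obtain ⟨k, h1, h2, rfl⟩ := h
  rw [d.iter h2 n] at hn ⊢
  refine ⟨_, ?_, modelBlock_iter_le n h2, rfl⟩
  by_contra hc
  have h0 : (modelBlock (l.get j).1 (l.get j).2)^[n] k = 0 := by omega
  rw [h0, d.h0 j] at hn
  exact hn rfl

theorem blk_back {j : Fin l.length} {v : V} (hv : v ≠ 0) {n : ℕ}
    (h : d.Blk j (T^[n] v)) : d.Blk j v := by
  obtain ⟨jk, ⟨h1, h2, h3⟩, _⟩ := d.hcover v hv
  have hb : d.Blk jk.1 v := ⟨jk.2, h1, h2, h3⟩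
  have hc : d.Blk jk.1 (T^[n] v) := d.blk_closed hb (d.blk_ne h)
  exact (d.blk_unique hc h) ▸ hb

theorem to_one {j : Fin l.length} {v : V} (h : d.Blk j v) : ∃ a, T^[a] v = d.e j 1 := by
  obtain ⟨k, h1, h2, rfl⟩ := h
  refine ⟨k - 1, ?_⟩
  rw [d.iter h2, modelBlock_iter_lt (by omega) h2]
  congr 1
  omega

theorem evz_iff {j : Fin l.length} {v : V} (h : d.Blk j v) :
    EvZ T v ↔ (l.get j).1 = true := by
  obtain ⟨k, h1, h2, rfl⟩ := h
  cases hb : (l.get j).1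
  · simp only [Bool.false_eq_true, iff_false]
    rintro ⟨n, hn⟩
    rw [d.iter h2, hb] at hn
    have hmem := modelBlock_false_iter_mem (le_trans h1 h2) n h1 h2
    exact d.e_ne hmem.1 hmem.2 hn
  · simp only [iff_true]
    refine ⟨k, ?_⟩
    rw [d.iter h2, hb, modelBlock_true_iter, Nat.sub_self, d.h0]

open Classical in
noncomputable def blkFinset (j : Fin l.length) : Finset V :=
  (Finset.Icc 1 (l.get j).2).image (d.e j)

theorem mem_blkFinset {j : Fin l.length} {v : V} :
    v ∈ d.blkFinset j ↔ d.Blk j v := by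
  classical
  simp [blkFinset, Blk, Finset.mem_image, Finset.mem_Icc, and_assoc]

theorem card_blkFinset (j : Fin l.length) : (d.blkFinset j).card = (l.get j).2 := by
  classical
  rw [blkFinset, Finset.card_image_of_injOn, Nat.card_Icc]
  · omega
  · intro x hx y hy hxy
    simp only [Finset.coe_Icc, Set.mem_Icc] at hx hy
    exact d.hinj j (Set.mem_Iic.2 hx.2) (Set.mem_Iic.2 hy.2) hxy

end Decomp

theorem multiset_congr {α : Type} {l l' : List α} (σ : Fin l.length ≃ Fin l'.length)
    (h : ∀ j, l.get j = l'.get (σ j)) : (l : Multiset α) = (l' : Multiset α) := by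
  have key : ∀ (L : List α), (L : Multiset α) = Multiset.map L.get (Finset.univ.val) := by
    intro L
    rw [Fin.univ_def]
    show (L : Multiset α) = Multiset.map L.get ↑(List.finRange L.length)
    rw [Multiset.map_coe, List.map_get_finRange]
  rw [key l, key l']
  have hfun : (l.get : Fin l.length → α) = l'.get ∘ σ := funext h
  rw [hfun, ← Multiset.map_map]
  congr 1
  have huniv := Finset.map_univ_equiv σ
  calc Multiset.map (⇑σ) Finset.univ.val = (Finset.univ.map σ.toEmbedding).val := by
        rw [Finset.map_val]; rfl
    _ = Finset.univ.val := by rw [huniv]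

theorem Decomp.multiset_eq {T : V → V} {l l' : List (Bool × ℕ)}
    (d : Decomp T l) (d' : Decomp T l') :
    (l : Multiset (Bool × ℕ)) = (l' : Multiset (Bool × ℕ)) := by
  have ex : ∀ (l₁ l₂ : List (Bool × ℕ)) (d₁ : Decomp T l₁) (d₂ : Decomp T l₂)
      (j : Fin l₁.length), ∃ j', d₂.Blk j' (d₁.e j 1) := by
    intro l₁ l₂ d₁ d₂ j
    obtain ⟨jk, ⟨h1, h2, h3⟩, _⟩ := d₂.hcover (d₁.e j 1) (d₁.e_ne le_rfl (d₁.hm j))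
    exact ⟨jk.1, jk.2, h1, h2, h3⟩
  choose F hF using ex l l' d d'
  choose G hG using ex l' l d' d
  have hBlk : ∀ j v, d.Blk j v ↔ d'.Blk (F j) v := by
    intro j v
    constructor
    · intro hv
      obtain ⟨a, ha⟩ := d.to_one hv
      exact d'.blk_back (d.blk_ne hv) (ha ▸ hF j)
    · intro hv
      obtain ⟨a, ha⟩ := d'.to_one hv
      obtain ⟨c, hc⟩ := d'.to_one (hF j)
      have h1 : T^[a] v = T^[c] (d.e j 1) := by rw [ha, hc]
      have h2 : d.Blk j (T^[c] (d.e j 1)) := by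
        refine d.blk_closed (d.blk_self j) ?_
        rw [hc]
        exact d'.e_ne le_rfl (d'.hm (F j))
      exact d.blk_back (d'.blk_ne hv) (h1 ▸ h2)
  have hGF : ∀ j, G (F j) = j := by
    intro j
    have h2 := hG (F j)
    have h3 : d.Blk j (d'.e (F j) 1) := (hBlk j _).2 (d'.blk_self (F j))
    exact d.blk_unique h2 h3
  have hFG : ∀ j', F (G j') = j' := by
    intro j'
    exact d'.blk_unique ((hBlk (G j') _).1 (hG j')) (d'.blk_self j')
  have hget : ∀ j, l.get j = l'.get (F j) := by
    intro j
    have e1 := d.evz_iff (d.blk_self j)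
    have e2 := d'.evz_iff (hF j)
    have hb : (l.get j).1 = (l'.get (F j)).1 := by
      rw [e1] at e2
      cases h1 : (l.get j).1 <;> cases h2 : (l'.get (F j)).1 <;> simp_all
    have hm2 : (l.get j).2 = (l'.get (F j)).2 := by
      rw [← d.card_blkFinset j, ← d'.card_blkFinset (F j)]
      congr 1
      ext v
      rw [d.mem_blkFinset, d'.mem_blkFinset]
      exact hBlk j v
    exact Prod.ext hb hm2
  exact multiset_congr ⟨F, G, hGF, hFG⟩ hget

end F1J

namespace F1J

open Function

variable {V : Type} [Zero V]

section Existence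

variable [Fintype V]

theorem succ_apply (T : V → V) (n : ℕ) (x : V) : T (T^[n] x) = T^[n+1] x :=
  (Function.iterate_succ_apply' T n x).symm

open Classical in
noncomputable def Nidx (T : V → V) (v : V) : ℕ :=
  if h : EvZ T v then Nat.find h else 0

open Classical in
noncomputable def orbit (T : V → V) (v : V) : Finset V :=
  Finset.univ.filter (fun w => ∃ i, T^[i] v = w)

theorem mem_orbit {T : V → V} {v w : V} : w ∈ orbit T v ↔ ∃ i, T^[i] v = w := by
  simp [orbit]

theorem mem_orbit_self (T : V → V) (v : V) : v ∈ orbit T v := mem_orbit.2 ⟨0, rfl⟩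

noncomputable def F1ord (V : Type) [Fintype V] : LinearOrder V :=
  LinearOrder.lift' (Fintype.equivFin V) (Fintype.equivFin V).injective

noncomputable def orep (T : V → V) (v : V) : V :=
  letI := F1ord V
  (orbit T v).min' ⟨v, mem_orbit_self T v⟩

theorem orep_mem (T : V → V) (v : V) : orep T v ∈ orbit T v := by
  letI := F1ord V
  unfold orep
  exact Finset.min'_mem _ _

omit [Fintype V] in
theorem min'_congr {α : Type} [LinearOrder α] {s t : Finset α} (h : s = t)
    (hs : s.Nonempty) (ht : t.Nonempty) : s.min' hs = t.min' ht := by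
  subst h; rfl

theorem orep_congr {T : V → V} {v w : V} (h : orbit T v = orbit T w) :
    orep T v = orep T w := by
  letI := F1ord V
  unfold orep
  exact min'_congr h _ _

theorem dichotomy {T : V → V} (hT : IsF1End T) (v : V) (hv : v ≠ 0) :
    EvZ T v ∨ v ∈ periodicPts T := by
  by_cases h : EvZ T v
  · exact Or.inl h
  right
  have hnz : ∀ n, T^[n] v ≠ 0 := fun n hn => h ⟨n, hn⟩
  obtain ⟨i, j, hij, hEq⟩ := Finite.exists_ne_map_eq_of_infinite (fun n : ℕ => T^[n] v)
  have key : ∀ a b : ℕ, a < b → T^[a] v = T^[b] v → v ∈ periodicPts T := by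
    intro a b hab hEq2
    have h1 : T^[a] (T^[b-a] v) = T^[a] v := by
      rw [← iterate_add_apply]
      rw [show a + (b - a) = b by omega]
      exact hEq2.symm
    have h2 : T^[b-a] v = v := cancel hT a _ _ h1 (by rw [h1]; exact hnz a)
    exact mk_mem_periodicPts (by omega) h2
  rcases hij.lt_or_gt with h' | h'
  · exact key i j h' hEq
  · exact key j i h' hEq.symm

theorem per_not_evz {T : V → V} (hT : IsF1End T) {v : V} (hv : v ≠ 0)
    (hp : v ∈ periodicPts T) : ¬ EvZ T v := by
  rintro ⟨n, hn⟩
  obtain ⟨p, hp0, hper⟩ := hp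
  have hn1 : 1 ≤ n := by
    rcases Nat.eq_zero_or_pos n with h | h
    · subst h; exact absurd hn hv
    · exact h
  have hpn : IsPeriodicPt T (p * n) v := hper.mul_const n
  apply hv
  have hpn' : T^[p * n] v = v := hpn
  have hge : n ≤ p * n := Nat.le_mul_of_pos_left n hp0
  calc v = T^[p * n] v := hpn'.symm
    _ = T^[p * n - n] (T^[n] v) := by rw [← iterate_add_apply]; congr 1; omega
    _ = 0 := by rw [hn, iter_zero hT]

theorem periodic_iter_ne {T : V → V} (hT : IsF1End T) {v : V} (hv : v ≠ 0)
    (hp : v ∈ periodicPts T) (i : ℕ) : T^[i] v ≠ 0 :=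
  fun h => per_not_evz hT hv hp ⟨i, h⟩

theorem orbit_eq {T : V → V} {v w : V} (hp : v ∈ periodicPts T) (hw : w ∈ orbit T v) :
    orbit T w = orbit T v := by
  obtain ⟨i, rfl⟩ := mem_orbit.1 hw
  ext x
  simp only [mem_orbit]
  constructor
  · rintro ⟨j, rfl⟩
    exact ⟨j + i, by rw [iterate_add_apply]⟩
  · rintro ⟨j, rfl⟩
    obtain ⟨p, hp0, hper⟩ := hp
    have hle : i + 1 ≤ p * (i + 1) := Nat.le_mul_of_pos_left _ hp0
    refine ⟨j + p * (i + 1) - i, ?_⟩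
    rw [← iterate_add_apply]
    rw [show j + p * (i + 1) - i + i = j + p * (i + 1) by omega]
    rw [iterate_add_apply]
    have h2 : T^[p * (i + 1)] v = v := hper.mul_const (i + 1)
    rw [h2]

theorem orbit_periodic {T : V → V} {v w : V} (hp : v ∈ periodicPts T)
    (hw : w ∈ orbit T v) : w ∈ periodicPts T := by
  obtain ⟨i, rfl⟩ := mem_orbit.1 hw
  obtain ⟨p, hp0, hper⟩ := hp
  exact ⟨p, hp0, hper.apply_iterate i⟩

open Classical in
noncomputable def Tp (T : V → V) : Finset V :=
  Finset.univ.filter (fun t => t ≠ 0 ∧ ∀ w, T w ≠ t)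

open Classical in
noncomputable def Rp (T : V → V) : Finset V :=
  Finset.univ.filter (fun r => r ≠ 0 ∧ r ∈ periodicPts T ∧ orep T r = r)

theorem mem_Tp {T : V → V} {t : V} : t ∈ Tp T ↔ t ≠ 0 ∧ ∀ w, T w ≠ t := by simp [Tp]

theorem mem_Rp {T : V → V} {r : V} :
    r ∈ Rp T ↔ r ≠ 0 ∧ r ∈ periodicPts T ∧ orep T r = r := by simp [Rp]

theorem rp_pre {T : V → V} {r : V} (hr : r ∈ Rp T) : ∃ w, T w = r := by
  obtain ⟨h0, hp, _⟩ := mem_Rp.1 hr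
  obtain ⟨p, hp0, hper⟩ := hp
  refine ⟨T^[p-1] r, ?_⟩
  rw [succ_apply T, show p - 1 + 1 = p by omega]
  exact hper

theorem orep_rp {T : V → V} (hT : IsF1End T) {v : V} (hv : v ≠ 0)
    (hp : v ∈ periodicPts T) : orep T v ∈ Rp T ∧ v ∈ orbit T (orep T v) := by
  have h1 : orep T v ∈ orbit T v := orep_mem T v
  have hper : orep T v ∈ periodicPts T := orbit_periodic hp h1
  have hne : orep T v ≠ 0 := by
    obtain ⟨i, hi⟩ := mem_orbit.1 h1
    rw [← hi]
    exact periodic_iter_ne hT hv hp i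
  have horb : orbit T (orep T v) = orbit T v := orbit_eq hp h1
  have hfix : orep T (orep T v) = orep T v := orep_congr horb
  refine ⟨mem_Rp.2 ⟨hne, hper, hfix⟩, ?_⟩
  rw [horb]
  exact mem_orbit_self T v

theorem rp_unique {T : V → V} {r r' v : V} (hr : r ∈ Rp T) (hr' : r' ∈ Rp T)
    (h : v ∈ orbit T r) (h' : v ∈ orbit T r') : r = r' := by
  have h1 : orbit T v = orbit T r := orbit_eq (mem_Rp.1 hr).2.1 h
  have h2 : orbit T v = orbit T r' := orbit_eq (mem_Rp.1 hr').2.1 h'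
  calc r = orep T r := (mem_Rp.1 hr).2.2.symm
    _ = orep T v := orep_congr (h1.symm : orbit T r = orbit T v)
    _ = orep T r' := orep_congr h2
    _ = r' := (mem_Rp.1 hr').2.2

theorem nidx_spec {T : V → V} {v : V} (h : EvZ T v) : T^[Nidx T v] v = 0 := by
  classical
  unfold Nidx
  rw [dif_pos h]
  exact Nat.find_spec h

theorem nidx_min {T : V → V} {v : V} (h : EvZ T v) {i : ℕ} (hi : i < Nidx T v) :
    T^[i] v ≠ 0 := by
  classical
  unfold Nidx at hi
  rw [dif_pos h] at hi
  exact Nat.find_min h hi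

theorem nidx_pos {T : V → V} {v : V} (h : EvZ T v) (hv : v ≠ 0) : 1 ≤ Nidx T v := by
  by_contra hc
  have h0 : Nidx T v = 0 := by omega
  have := nidx_spec h
  rw [h0] at this
  exact hv this

theorem lt_nidx {T : V → V} (hT : IsF1End T) {v : V} (h : EvZ T v) {i : ℕ}
    (hne : T^[i] v ≠ 0) : i < Nidx T v := by
  by_contra hc
  push_neg at hc
  apply hne
  rw [show i = (i - Nidx T v) + Nidx T v by omega, iterate_add_apply, nidx_spec h,
    iter_zero hT]

theorem tp_evz {T : V → V} (hT : IsF1End T) {t : V} (ht : t ∈ Tp T) : EvZ T t := by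
  obtain ⟨h0, hpre⟩ := mem_Tp.1 ht
  rcases dichotomy hT t h0 with h | h
  · exact h
  exfalso
  obtain ⟨p, hp0, hper⟩ := h
  apply hpre (T^[p-1] t)
  rw [succ_apply T, show p - 1 + 1 = p by omega]
  exact hper

theorem top_cancel {T : V → V} (hT : IsF1End T) {t : V} (hpre : ∀ w, T w ≠ t)
    {a b : ℕ} (hab : a ≤ b) (h : T^[a] t = T^[b] t) (hne : T^[a] t ≠ 0) : a = b := by
  by_contra h'
  have h1 : T^[a] (T^[b-a] t) = T^[a] t := by
    rw [← iterate_add_apply, show a + (b - a) = b by omega, h]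
  have h2 : T^[b-a] t = t := cancel hT a _ _ h1 (by rw [h1]; exact hne)
  apply hpre (T^[b-a-1] t)
  rw [succ_apply T, show b - a - 1 + 1 = b - a by omega, h2]

theorem iter_bound {T : V → V} (hT : IsF1End T) {v w : V} (hv : v ≠ 0)
    (hEvZ : EvZ T v) {i : ℕ} (h : T^[i] w = v) : i < Fintype.card V := by
  have hnz : ∀ s ≤ i, T^[s] w ≠ 0 := by
    intro s hs h0
    apply hv
    rw [← h, show i = (i - s) + s by omega, iterate_add_apply, h0, iter_zero hT]
  have hinj : Set.InjOn (fun s => T^[s] w) ↑(Finset.Iic i) := by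
    intro s hs s' hs' hss
    simp only [Finset.coe_Iic, Set.mem_Iic] at hs hs'
    by_contra hne
    have key : ∀ a b : ℕ, a < b → b ≤ i → T^[a] w = T^[b] w → False := by
      intro a b hab hbi hEq
      have hper : IsPeriodicPt T (b - a) (T^[a] w) := by
        show T^[b-a] (T^[a] w) = T^[a] w
        rw [← iterate_add_apply, show b - a + a = b by omega]
        exact hEq.symm
      have hmem : T^[a] w ∈ periodicPts T := mk_mem_periodicPts (by omega) hper
      have hevz : EvZ T (T^[a] w) := by
        obtain ⟨n, hn⟩ := hEvZ
        refine ⟨n + (i - a), ?_⟩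
        have hva : T^[i-a] (T^[a] w) = v := by
          rw [← iterate_add_apply, show i - a + a = i by omega]
          exact h
        rw [iterate_add_apply, hva, hn]
      exact per_not_evz hT (hnz a (by omega)) hmem hevz
    rcases Nat.lt_or_ge s s' with h' | h'
    · exact key s s' h' hs' hss
    · exact key s' s (by omega) hs hss.symm
  have hcard := Finset.card_le_card_of_injOn (fun s => T^[s] w)
    (fun a _ => Finset.mem_univ _) hinj
  rw [Nat.card_Iic, Finset.card_univ] at hcard
  omega

theorem exists_top {T : V → V} (hT : IsF1End T) {v : V} (hv : v ≠ 0)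
    (hEvZ : EvZ T v) : ∃ t i, t ∈ Tp T ∧ i < Nidx T t ∧ T^[i] t = v := by
  classical
  set P : ℕ → Prop := fun i => ∃ w, T^[i] w = v with hP
  have hP0 : P 0 := ⟨v, rfl⟩
  set i₀ := Nat.findGreatest P (Fintype.card V) with hi₀
  have hPi₀ : P i₀ := Nat.findGreatest_spec (Nat.zero_le _) hP0
  obtain ⟨t, ht⟩ := hPi₀
  have htne : t ≠ 0 := fun h => hv (by rw [← ht, h, iter_zero hT])
  have hpre : ∀ w, T w ≠ t := by
    intro w hw
    have hP1 : P (i₀ + 1) := ⟨w, by rw [iterate_succ_apply, hw, ht]⟩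
    obtain ⟨u, hu⟩ := hP1
    have hb : i₀ + 1 ≤ Fintype.card V := le_of_lt (iter_bound hT hv hEvZ hu)
    have := Nat.le_findGreatest (P := P) hb ⟨u, hu⟩
    omega
  have hEvZt : EvZ T t := by
    obtain ⟨n, hn⟩ := hEvZ
    exact ⟨n + i₀, by rw [iterate_add_apply, ht, hn]⟩
  exact ⟨t, i₀, mem_Tp.2 ⟨htne, hpre⟩, lt_nidx hT hEvZt (by rw [ht]; exact hv), ht⟩

theorem top_unique {T : V → V} (hT : IsF1End T) {t t' : V} {i i' : ℕ}
    (ht : t ∈ Tp T) (ht' : t' ∈ Tp T) (h : T^[i] t = T^[i'] t')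
    (hne : T^[i] t ≠ 0) : t = t' ∧ i = i' := by
  have key : ∀ (s s' : V) (a a' : ℕ), s ∈ Tp T → s' ∈ Tp T → a ≤ a' →
      T^[a] s = T^[a'] s' → T^[a] s ≠ 0 → s = s' ∧ a = a' := by
    intro s s' a a' hs hs' hle hEq hne'
    have h1 : T^[a] (T^[a'-a] s') = T^[a] s := by
      rw [← iterate_add_apply, show a + (a' - a) = a' by omega, hEq]
    have h2 : T^[a'-a] s' = s := cancel hT a _ _ h1 (by rw [h1]; exact hne')
    have h3 : a' - a = 0 := by
      by_contra hc
      apply (mem_Tp.1 hs).2 (T^[a'-a-1] s')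
      rw [succ_apply T, show a' - a - 1 + 1 = a' - a by omega, h2]
    rw [h3] at h2
    exact ⟨h2.symm, by omega⟩
  rcases le_total i i' with hle | hle
  · exact key t t' i i' ht ht' hle h hne
  · obtain ⟨he, hi⟩ := key t' t i' i ht' ht hle h.symm (h ▸ hne)
    exact ⟨he.symm, hi.symm⟩

end Existence

end F1J

namespace F1J

open Function

variable {V : Type} [Zero V] [Fintype V]

noncomputable def emb (T : V → V) (m : ℕ) (v : V) (k : ℕ) : V :=
  if k = 0 then 0 else T^[m - k] v

theorem emb_zero (T : V → V) (m : ℕ) (v : V) : emb T m v 0 = 0 := if_pos rfl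

open Classical in
noncomputable def blkOf (T : V → V) (v : V) : Bool × ℕ :=
  if ∀ w, T w ≠ v then (true, Nidx T v) else (false, minimalPeriod T v)

theorem blkOf_tp {T : V → V} {t : V} (ht : t ∈ Tp T) : blkOf T t = (true, Nidx T t) := by
  unfold blkOf
  rw [if_pos (mem_Tp.1 ht).2]

theorem blkOf_rp {T : V → V} {r : V} (hr : r ∈ Rp T) :
    blkOf T r = (false, minimalPeriod T r) := by
  unfold blkOf
  rw [if_neg]
  push_neg
  exact rp_pre hr

theorem tp_emb_ne {T : V → V} (hT : IsF1End T) {t : V} (ht : t ∈ Tp T) {k : ℕ}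
    (h1 : 1 ≤ k) (hk : k ≤ Nidx T t) : emb T (Nidx T t) t k ≠ 0 := by
  unfold emb
  rw [if_neg (by omega)]
  exact nidx_min (tp_evz hT ht) (by omega)

theorem tp_inj {T : V → V} (hT : IsF1End T) {t : V} (ht : t ∈ Tp T) :
    Set.InjOn (emb T (Nidx T t) t) (Set.Iic (Nidx T t)) := by
  intro k hk k' hk' h
  simp only [Set.mem_Iic] at hk hk'
  rcases Nat.eq_zero_or_pos k with h0 | h0
  · rcases Nat.eq_zero_or_pos k' with h0' | h0'
    · omega
    · exfalso
      apply tp_emb_ne hT ht h0' hk'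
      rw [← h, h0, emb_zero]
  rcases Nat.eq_zero_or_pos k' with h0' | h0'
  · exfalso
    apply tp_emb_ne hT ht h0 hk
    rw [h, h0', emb_zero]
  unfold emb at h
  rw [if_neg (by omega), if_neg (by omega)] at h
  have hev := tp_evz hT ht
  rcases le_total (Nidx T t - k) (Nidx T t - k') with hle | hle
  · have := top_cancel hT (mem_Tp.1 ht).2 hle h (nidx_min hev (by omega))
    omega
  · have := top_cancel hT (mem_Tp.1 ht).2 hle h.symm (nidx_min hev (by omega))
    omega

theorem tp_comm {T : V → V} (hT : IsF1End T) {t : V} (ht : t ∈ Tp T) :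
    ∀ k ≤ Nidx T t, T (emb T (Nidx T t) t k) =
      emb T (Nidx T t) t (modelBlock true (Nidx T t) k) := by
  intro k hk
  rcases Nat.eq_zero_or_pos k with h0 | h0
  · subst h0
    rw [emb_zero, hT.1, modelBlock_zero, emb_zero]
  · rw [modelBlock_true]
    unfold emb
    rw [if_neg (by omega), succ_apply T]
    rcases Nat.lt_or_ge k 2 with h2 | h2
    · have hk1 : k = 1 := by omega
      subst hk1
      rw [if_pos (by norm_num), show Nidx T t - 1 + 1 = Nidx T t by omega]
      exact nidx_spec (tp_evz hT ht)
    · rw [if_neg (by omega)]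
      congr 1
      omega

theorem tp_val_evz {T : V → V} (hT : IsF1End T) {t : V} (ht : t ∈ Tp T) {k : ℕ}
    (h1 : 1 ≤ k) (hk : k ≤ Nidx T t) : EvZ T (emb T (Nidx T t) t k) := by
  unfold emb
  rw [if_neg (by omega)]
  refine ⟨k, ?_⟩
  rw [← iterate_add_apply, show k + (Nidx T t - k) = Nidx T t by omega]
  exact nidx_spec (tp_evz hT ht)

theorem rp_period_pos {T : V → V} {r : V} (hr : r ∈ Rp T) : 0 < minimalPeriod T r :=
  minimalPeriod_pos_of_mem_periodicPts (mem_Rp.1 hr).2.1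

theorem rp_emb_ne {T : V → V} (hT : IsF1End T) {r : V} (hr : r ∈ Rp T) {k : ℕ}
    (h1 : 1 ≤ k) : emb T (minimalPeriod T r) r k ≠ 0 := by
  unfold emb
  rw [if_neg (by omega)]
  exact periodic_iter_ne hT (mem_Rp.1 hr).1 (mem_Rp.1 hr).2.1 _

theorem rp_inj {T : V → V} (hT : IsF1End T) {r : V} (hr : r ∈ Rp T) :
    Set.InjOn (emb T (minimalPeriod T r) r) (Set.Iic (minimalPeriod T r)) := by
  intro k hk k' hk' h
  simp only [Set.mem_Iic] at hk hk'
  have hp0 := rp_period_pos hr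
  rcases Nat.eq_zero_or_pos k with h0 | h0
  · rcases Nat.eq_zero_or_pos k' with h0' | h0'
    · omega
    · exfalso
      apply rp_emb_ne hT hr h0'
      rw [← h, h0, emb_zero]
  rcases Nat.eq_zero_or_pos k' with h0' | h0'
  · exfalso
    apply rp_emb_ne hT hr h0
    rw [h, h0', emb_zero]
  unfold emb at h
  rw [if_neg (by omega), if_neg (by omega)] at h
  have := iterate_injOn_Iio_minimalPeriod (f := T) (x := r)
    (Set.mem_Iio.2 (show minimalPeriod T r - k < minimalPeriod T r by omega))
    (Set.mem_Iio.2 (show minimalPeriod T r - k' < minimalPeriod T r by omega)) h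
  omega

theorem rp_comm {T : V → V} (hT : IsF1End T) {r : V} (hr : r ∈ Rp T) :
    ∀ k ≤ minimalPeriod T r, T (emb T (minimalPeriod T r) r k) =
      emb T (minimalPeriod T r) r (modelBlock false (minimalPeriod T r) k) := by
  intro k hk
  have hp0 := rp_period_pos hr
  rcases Nat.eq_zero_or_pos k with h0 | h0
  · subst h0
    rw [emb_zero, hT.1, modelBlock_zero, emb_zero]
  rcases Nat.lt_or_ge k 2 with h2 | h2
  · have hk1 : k = 1 := by omega
    subst hk1
    rw [modelBlock_false, if_neg (by omega), if_pos rfl]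
    unfold emb
    rw [if_neg (by omega), if_neg (by omega), succ_apply T,
      show minimalPeriod T r - 1 + 1 = minimalPeriod T r by omega, Nat.sub_self]
    rw [iterate_minimalPeriod]
    rfl
  · rw [modelBlock_false, if_neg (by omega), if_neg (by omega)]
    unfold emb
    rw [if_neg (by omega), if_neg (by omega), succ_apply T]
    congr 1
    omega

theorem cov_top {T : V → V} (hT : IsF1End T) {v : V} (hv : v ≠ 0) (hEvZ : EvZ T v) :
    ∃ t, t ∈ Tp T ∧ ∃ k, 1 ≤ k ∧ k ≤ Nidx T t ∧ emb T (Nidx T t) t k = v := by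
  obtain ⟨t, i, ht, hi, hit⟩ := exists_top hT hv hEvZ
  refine ⟨t, ht, Nidx T t - i, by omega, by omega, ?_⟩
  unfold emb
  rw [if_neg (by omega), show Nidx T t - (Nidx T t - i) = i by omega]
  exact hit

theorem cov_rp {T : V → V} (hT : IsF1End T) {v : V} (hv : v ≠ 0)
    (hp : v ∈ periodicPts T) : ∃ r, r ∈ Rp T ∧ ∃ k, 1 ≤ k ∧
      k ≤ minimalPeriod T r ∧ emb T (minimalPeriod T r) r k = v := by
  obtain ⟨hrp, hvorb⟩ := orep_rp hT hv hp
  obtain ⟨i, hi⟩ := mem_orbit.1 hvorb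
  have hp0 := rp_period_pos hrp
  have hsv : T^[i % minimalPeriod T (orep T v)] (orep T v) = v := by
    rw [iterate_mod_minimalPeriod_eq]
    exact hi
  have hslt : i % minimalPeriod T (orep T v) < minimalPeriod T (orep T v) :=
    Nat.mod_lt _ hp0
  refine ⟨orep T v, hrp, minimalPeriod T (orep T v) - i % minimalPeriod T (orep T v),
    by omega, by omega, ?_⟩
  unfold emb
  rw [if_neg (by omega)]
  rw [show minimalPeriod T (orep T v) -
    (minimalPeriod T (orep T v) - i % minimalPeriod T (orep T v)) =
    i % minimalPeriod T (orep T v) by omega]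
  exact hsv

theorem cov_unique {T : V → V} (hT : IsF1End T) {v₁ v₂ : V} {k₁ k₂ : ℕ}
    (h₁ : v₁ ∈ Tp T ∨ v₁ ∈ Rp T) (h₂ : v₂ ∈ Tp T ∨ v₂ ∈ Rp T)
    (ha1 : 1 ≤ k₁) (hb1 : k₁ ≤ (blkOf T v₁).2)
    (ha2 : 1 ≤ k₂) (hb2 : k₂ ≤ (blkOf T v₂).2)
    (heq : emb T (blkOf T v₁).2 v₁ k₁ = emb T (blkOf T v₂).2 v₂ k₂) :
    v₁ = v₂ ∧ k₁ = k₂ := by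
  rcases h₁ with h₁ | h₁ <;> rcases h₂ with h₂ | h₂
  · rw [blkOf_tp h₁] at hb1 heq
    rw [blkOf_tp h₂] at hb2 heq
    simp only at hb1 hb2 heq
    have heq' := heq
    unfold emb at heq'
    rw [if_neg (by omega), if_neg (by omega)] at heq'
    have hne : T^[Nidx T v₁ - k₁] v₁ ≠ 0 := nidx_min (tp_evz hT h₁) (by omega)
    obtain ⟨hv, hi⟩ := top_unique hT h₁ h₂ heq' hne
    subst hv
    exact ⟨rfl, by omega⟩
  · exfalso
    rw [blkOf_tp h₁] at hb1 heq
    rw [blkOf_rp h₂] at hb2 heq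
    simp only at hb1 hb2 heq
    have he : EvZ T (emb T (Nidx T v₁) v₁ k₁) := tp_val_evz hT h₁ ha1 hb1
    have hnz : emb T (Nidx T v₁) v₁ k₁ ≠ 0 := tp_emb_ne hT h₁ ha1 hb1
    have hper : emb T (Nidx T v₁) v₁ k₁ ∈ periodicPts T := by
      rw [heq]
      unfold emb
      rw [if_neg (by omega)]
      exact orbit_periodic (mem_Rp.1 h₂).2.1 (mem_orbit.2 ⟨_, rfl⟩)
    exact per_not_evz hT hnz hper he
  · exfalso
    rw [blkOf_rp h₁] at hb1 heq
    rw [blkOf_tp h₂] at hb2 heq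
    simp only at hb1 hb2 heq
    have he : EvZ T (emb T (Nidx T v₂) v₂ k₂) := tp_val_evz hT h₂ ha2 hb2
    have hnz : emb T (Nidx T v₂) v₂ k₂ ≠ 0 := tp_emb_ne hT h₂ ha2 hb2
    have hper : emb T (Nidx T v₂) v₂ k₂ ∈ periodicPts T := by
      rw [← heq]
      unfold emb
      rw [if_neg (by omega)]
      exact orbit_periodic (mem_Rp.1 h₁).2.1 (mem_orbit.2 ⟨_, rfl⟩)
    exact per_not_evz hT hnz hper he
  · rw [blkOf_rp h₁] at hb1 heq
    rw [blkOf_rp h₂] at hb2 heq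
    simp only at hb1 hb2 heq
    have heq' := heq
    unfold emb at heq'
    rw [if_neg (by omega), if_neg (by omega)] at heq'
    have hv : v₁ = v₂ := rp_unique h₁ h₂ (mem_orbit.2 ⟨_, rfl⟩)
      (mem_orbit.2 ⟨minimalPeriod T v₂ - k₂, heq'.symm⟩)
    subst hv
    have := iterate_injOn_Iio_minimalPeriod (f := T) (x := v₁)
      (Set.mem_Iio.2 (show minimalPeriod T v₁ - k₁ < minimalPeriod T v₁ by
        have := rp_period_pos h₁; omega))
      (Set.mem_Iio.2 (show minimalPeriod T v₁ - k₂ < minimalPeriod T v₁ by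
        have := rp_period_pos h₁; omega)) heq'
    exact ⟨rfl, by omega⟩

end F1J

namespace F1J

open Function

variable {V : Type} [Zero V] [Fintype V]

theorem exists_decomp {T : V → V} (hT : IsF1End T) : ∃ l, IsJordanDecomp T l := by
  classical
  set base : List V := (Tp T).toList ++ (Rp T).toList with hbase
  have hlen : (base.map (blkOf T)).length = base.length := List.length_map _
  have hbm : ∀ v ∈ base, v ∈ Tp T ∨ v ∈ Rp T := by
    intro v hv
    rcases List.mem_append.1 hv with h | h
    · exact Or.inl (Finset.mem_toList.1 h)
    · exact Or.inr (Finset.mem_toList.1 h)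
  have hnd : base.Nodup := by
    refine List.Nodup.append (Finset.nodup_toList _) (Finset.nodup_toList _) ?_
    intro a ha ha'
    obtain ⟨w, hw⟩ := rp_pre (Finset.mem_toList.1 ha')
    exact (mem_Tp.1 (Finset.mem_toList.1 ha)).2 w hw
  have hget : ∀ j : Fin (base.map (blkOf T)).length,
      (base.map (blkOf T)).get j = blkOf T (base.get (Fin.cast hlen j)) := by
    intro j
    simp [List.get_eq_getElem, List.getElem_map, Fin.cast]
  have hmem : ∀ j : Fin (base.map (blkOf T)).length,
      base.get (Fin.cast hlen j) ∈ Tp T ∨ base.get (Fin.cast hlen j) ∈ Rp T :=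
    fun j => hbm _ (base.get_mem _)
  refine ⟨base.map (blkOf T), fun j k =>
    emb T ((base.map (blkOf T)).get j).2 (base.get (Fin.cast hlen j)) k, ?_, ?_, ?_, ?_, ?_⟩
  · -- dimensions positive
    intro j
    rcases hmem j with h | h
    · rw [hget j, blkOf_tp h]
      exact nidx_pos (tp_evz hT h) (mem_Tp.1 h).1
    · rw [hget j, blkOf_rp h]
      exact rp_period_pos h
  · -- zero
    intro j
    exact emb_zero _ _ _
  · -- injectivity
    intro j
    rcases hmem j with h | h
    · simp only [hget j, blkOf_tp h]
      exact tp_inj hT h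
    · simp only [hget j, blkOf_rp h]
      exact rp_inj hT h
  · -- commutation
    intro j k hk
    rcases hmem j with h | h
    · simp only [hget j, blkOf_tp h] at hk ⊢
      exact tp_comm hT h k hk
    · simp only [hget j, blkOf_rp h] at hk ⊢
      exact rp_comm hT h k hk
  · -- coverage
    intro v hv
    have main : ∃ u, (u ∈ Tp T ∨ u ∈ Rp T) ∧ ∃ k, 1 ≤ k ∧ k ≤ (blkOf T u).2 ∧
        emb T (blkOf T u).2 u k = v := by
      rcases dichotomy hT v hv with hEvZ | hPer
      · obtain ⟨t, ht, k, hk1, hk2, hkv⟩ := cov_top hT hv hEvZ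
        exact ⟨t, Or.inl ht, k, hk1, by rw [blkOf_tp ht]; exact hk2,
          by rw [blkOf_tp ht]; exact hkv⟩
      · obtain ⟨r, hr, k, hk1, hk2, hkv⟩ := cov_rp hT hv hPer
        exact ⟨r, Or.inr hr, k, hk1, by rw [blkOf_rp hr]; exact hk2,
          by rw [blkOf_rp hr]; exact hkv⟩
    obtain ⟨u, hu, k, hk1, hk2, hkv⟩ := main
    have humem : u ∈ base := by
      rcases hu with h | h
      · exact List.mem_append.2 (Or.inl (Finset.mem_toList.2 h))
      · exact List.mem_append.2 (Or.inr (Finset.mem_toList.2 h))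
    obtain ⟨jb, hjb⟩ := List.mem_iff_get.1 humem
    refine ⟨(Fin.cast hlen.symm jb, k), ?_, ?_⟩
    · have hc : Fin.cast hlen (Fin.cast hlen.symm jb) = jb := Fin.ext rfl
      refine ⟨hk1, ?_, ?_⟩
      · simp only [hget (Fin.cast hlen.symm jb), hc, hjb]
        exact hk2
      · simp only [hget (Fin.cast hlen.symm jb), hc, hjb]
        exact hkv
    · rintro ⟨j', k'⟩ ⟨h1', h2', h3'⟩
      simp only [hget j'] at h2' h3'
      obtain ⟨hveq, hkeq⟩ := cov_unique hT (hmem j') hu h1' h2' hk1 hk2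
        (h3'.trans hkv.symm)
      have hc : Fin.cast hlen (Fin.cast hlen.symm jb) = jb := Fin.ext rfl
      have hj : Fin.cast hlen j' = Fin.cast hlen (Fin.cast hlen.symm jb) := by
        apply List.nodup_iff_injective_get.1 hnd
        rw [hc, hjb, hveq]
      have hval := congrArg Fin.val hj
      simp only [Fin.coe_cast] at hval
      exact Prod.ext (Fin.ext hval) hkeq

end F1J

/-- Jordan normal form over `F₁`: every endomorphism of a finite pointed
set decomposes as a direct sum of blocks each equivalent to a nilpotent block `N_m` or a
cyclic block `C_m`, uniquely up to reordering of the summands. -/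
theorem stmt2 {V : Type} [Zero V] [Fintype V] (T : V → V) (hT : IsF1End T) :
    ∃ l : List (Bool × ℕ), IsJordanDecomp T l ∧
      ∀ l' : List (Bool × ℕ), IsJordanDecomp T l' →
        (l' : Multiset (Bool × ℕ)) = (l : Multiset (Bool × ℕ)) := by
  obtain ⟨l, hl⟩ := F1J.exists_decomp hT
  refine ⟨l, hl, fun l' hl' => ?_⟩
  obtain ⟨d⟩ := F1J.isJordanDecomp_iff.1 hl
  obtain ⟨d'⟩ := F1J.isJordanDecomp_iff.1 hl'
  exact d'.multiset_eq d
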